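/- For each pair of real numbers x₁, x₂ with x₁ ∈ (1 − √6/3, 1/3) and x₂ ∈ (1/3, x₁(2 − x₁)), there exists a unique pair of real numbers (a, b) satisfying the system (1-2a)x₁² + 2ax₁ = x₂ and (1-2b)x₂² + 2bx₂ = x₁; moreover this unique pair satisfies 1/2 < a < 1 and 0 < b < 1/2, and is given explicitly by a = (x₂ − x₁²)/(2x₁(1 − x₁)) and b = (x₁ − x₂²)/(2x₂(1 − x₂)). Consequently {x₁, x₂} is a 2-periodic orbit of the map f_{a,b}: f_{a,b}(x₁) = x₂ and f_{a,b}(x₂) = x₁. -/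

import Mathlib

/-- Theorem on 2-periodic points: for `x₁ ∈ (1 - √6/3, 1/3)` and
`x₂ ∈ (1/3, x₁(2-x₁))` there is a unique pair `(a,b)` solving the system
`(1-2a)x₁² + 2a x₁ = x₂`, `(1-2b)x₂² + 2b x₂ = x₁`; it satisfies
`1/2 < a < 1`, `0 < b < 1/2`, is given by the explicit formulas, and
`{x₁, x₂}` is a 2-periodic orbit of `f_{a,b}`. -/
theorem two_periodic_orbit (x1 x2 : ℝ)
    (hx1 : x1 ∈ Set.Ioo (1 - Real.sqrt 6 / 3) (1/3:ℝ))
    (hx2 : x2 ∈ Set.Ioo (1/3:ℝ) (x1*(2-x1)))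
    (a b : ℝ)
    (hadef : a = (x2 - x1^2)/(2*x1*(1-x1)))
    (hbdef : b = (x1 - x2^2)/(2*x2*(1-x2)))
    (f : ℝ → ℝ)
    (hf1 : ∀ x ∈ Set.Icc (0:ℝ) (1/3), f x = (1 - 2*a)*x^2 + 2*a*x)
    (hf2 : ∀ x ∈ Set.Ioo (1/3:ℝ) (2/3), f x = (1 - 2*b)*x^2 + 2*b*x)
    (hf3 : ∀ x ∈ Set.Icc (2/3:ℝ) 1, f x = x) :
    (∃! p : ℝ × ℝ,
      (1 - 2*p.1)*x1^2 + 2*p.1*x1 = x2 ∧ (1 - 2*p.2)*x2^2 + 2*p.2*x2 = x1) ∧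
    ((1 - 2*a)*x1^2 + 2*a*x1 = x2 ∧ (1 - 2*b)*x2^2 + 2*b*x2 = x1) ∧
    (1/2 < a ∧ a < 1) ∧ (0 < b ∧ b < 1/2) ∧
    (f x1 = x2 ∧ f x2 = x1) := by
  obtain ⟨hx1l, hx1r⟩ := hx1
  obtain ⟨hx2l, hx2r⟩ := hx2
  have h6 : Real.sqrt 6 < 3 := by
    nlinarith [Real.sq_sqrt (by norm_num : (0:ℝ) ≤ 6), Real.sqrt_nonneg 6]
  have hx1pos : 0 < x1 := by linarith
  have hx2pos : 0 < x2 := by linarith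
  have hx2lt : x2 < 5/9 := by nlinarith
  have hx2lt1 : x2 < 1 := by linarith
  have hd1 : 0 < 2*x1*(1-x1) := by nlinarith
  have hd2 : 0 < 2*x2*(1-x2) := by nlinarith
  have ha' : a * (2*x1*(1-x1)) = x2 - x1^2 := by
    rw [hadef]; exact div_mul_cancel₀ _ (ne_of_gt hd1)
  have hb' : b * (2*x2*(1-x2)) = x1 - x2^2 := by
    rw [hbdef]; exact div_mul_cancel₀ _ (ne_of_gt hd2)
  have eq1 : (1 - 2*a)*x1^2 + 2*a*x1 = x2 := by linear_combination ha'
  have eq2 : (1 - 2*b)*x2^2 + 2*b*x2 = x1 := by linear_combination hb'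
  have hx1sq : x2^2 < x1 := by
    nlinarith [mul_pos (by linarith : (0:ℝ) < 1 - x1)
      (by nlinarith : (0:ℝ) < 1 - 3*x1 + x1^2), sq_nonneg x2, mul_pos hx1pos hx1pos]
  refine ⟨⟨(a, b), ⟨eq1, eq2⟩, ?_⟩, ⟨eq1, eq2⟩, ⟨?_, ?_⟩, ⟨?_, ?_⟩, ?_, ?_⟩
  · rintro ⟨p, q⟩ ⟨h1, h2⟩
    have hp : p = a := by
      have : (p - a) * (2*x1*(1-x1)) = 0 := by linear_combination h1 - eq1
      have := mul_eq_zero.mp this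
      rcases this with h | h
      · linarith
      · exfalso; linarith
    have hq : q = b := by
      have : (q - b) * (2*x2*(1-x2)) = 0 := by linear_combination h2 - eq2
      rcases mul_eq_zero.mp this with h | h
      · linarith
      · exfalso; linarith
    simp [hp, hq, Prod.ext_iff]
  · nlinarith [ha']
  · nlinarith [ha']
  · nlinarith [hb']
  · nlinarith [hb']
  · rw [hf1 x1 ⟨le_of_lt hx1pos, le_of_lt hx1r⟩]; exact eq1
  · rw [hf2 x2 ⟨hx2l, by linarith⟩]; exact eq2
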